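/- Let ζ = exp(2πi/5), let σ : ℂP^4 → ℂP^4 be the map induced by the linear cyclic shift (z_0, z_1, z_2, z_3, z_4) ↦ (z_1, z_2, z_3, z_4, z_0) of ℂ^5, and let V = {[z_0 : z_1 : z_2 : z_3 : z_4] ∈ ℂP^4 : z_0^2+z_1^2+z_2^2+z_3^2+z_4^2 = 0 and z_0^3+z_1^3+z_2^3+z_3^3+z_4^3 = 0}. Then σ(V) = V, and the set of fixed points of σ in V is exactly {[1 : ζ^j : ζ^{2j} : ζ^{3j} : ζ^{4j}] : j = 1, 2, 3, 4}, which has exactly 4 elements. -/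
import Mathlib


open scoped LinearAlgebra.Projectivization

/-- The linear automorphism of `ℂ⁵` given by the cyclic shift
`(z₀, z₁, z₂, z₃, z₄) ↦ (z₁, z₂, z₃, z₄, z₀)`. -/
noncomputable def cycShift : (Fin 5 → ℂ) ≃ₗ[ℂ] (Fin 5 → ℂ) :=
  LinearEquiv.funCongrLeft ℂ ℂ (Equiv.addRight (1 : Fin 5))

/-- The induced map `σ` on the projective space `ℂP⁴`. -/
noncomputable def sigmaMap : ℙ ℂ (Fin 5 → ℂ) → ℙ ℂ (Fin 5 → ℂ) :=
  Projectivization.map cycShift.toLinearMap cycShift.injective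

/-- The K3 surface `V ⊆ ℂP⁴` cut out by `Σ zᵢ² = 0` and `Σ zᵢ³ = 0`. -/
def Vset : Set (ℙ ℂ (Fin 5 → ℂ)) :=
  {p | (∑ i, (p.rep i) ^ 2) = 0 ∧ (∑ i, (p.rep i) ^ 3) = 0}

/-- The point `[1 : ζʲ : ζ²ʲ : ζ³ʲ : ζ⁴ʲ]` of `ℂP⁴`. -/
noncomputable def fixPt (ζ : ℂ) (j : ℕ) : ℙ ℂ (Fin 5 → ℂ) :=
  Projectivization.mk ℂ (fun i : Fin 5 => ζ ^ (j * (i : ℕ)))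
    (fun h => one_ne_zero (α := ℂ) (by simpa using congrFun h 0))

lemma cycShift_apply (v : Fin 5 → ℂ) (i : Fin 5) : cycShift v i = v (i + 1) := rfl

lemma fixPt_def (ζ : ℂ) (j : ℕ) : fixPt ζ j =
    Projectivization.mk ℂ (fun i : Fin 5 => ζ ^ (j * (i : ℕ)))
      (fun h => one_ne_zero (α := ℂ) (by simpa using congrFun h 0)) := rfl

lemma mem_Vset_mk {v : Fin 5 → ℂ} (hv : v ≠ 0) :
    Projectivization.mk ℂ v hv ∈ Vset ↔ ((∑ i, v i ^ 2) = 0 ∧ (∑ i, v i ^ 3) = 0) := by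
  obtain ⟨a, ha⟩ := Projectivization.exists_smul_eq_mk_rep ℂ v hv
  have h2 : ∀ k : ℕ, (∑ i, ((Projectivization.mk ℂ v hv).rep i) ^ k)
      = (a : ℂ) ^ k * ∑ i, v i ^ k := by
    intro k
    rw [Finset.mul_sum]
    refine Finset.sum_congr rfl fun i _ => ?_
    rw [← ha]
    simp [mul_pow, Units.smul_def]
  have hane : (a : ℂ) ≠ 0 := a.ne_zero
  constructor
  · rintro ⟨u2, u3⟩
    rw [h2 2] at u2; rw [h2 3] at u3
    exact ⟨by simpa [pow_ne_zero _ hane] using u2, by simpa [pow_ne_zero _ hane] using u3⟩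
  · rintro ⟨u2, u3⟩
    exact ⟨by rw [h2 2, u2, mul_zero], by rw [h2 3, u3, mul_zero]⟩

lemma geom_zero {x : ℂ} (hx : x ≠ 1) (h5 : x ^ 5 = 1) : (∑ i : Fin 5, x ^ (i : ℕ)) = 0 := by
  rw [Fin.sum_univ_eq_sum_range (fun n => x ^ n) 5, geom_sum_eq hx, h5, sub_self,
    zero_div]

lemma pow_mod5 {ζ : ℂ} (h5 : ζ ^ 5 = 1) (m : ℕ) : ζ ^ m = ζ ^ (m % 5) := by
  conv_lhs => rw [← Nat.mod_add_div m 5, pow_add, pow_mul, h5, one_pow, mul_one]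

lemma sigmaMap_mk (v : Fin 5 → ℂ) (hv : v ≠ 0) :
    sigmaMap (Projectivization.mk ℂ v hv) =
      Projectivization.mk ℂ (cycShift v) (by simp [cycShift.map_eq_zero_iff, hv]) := by
  simp [sigmaMap, Projectivization.map_mk]

lemma fixPt_mem {ζ : ℂ} (h5 : ζ ^ 5 = 1) {j : ℕ} (hj1 : ζ ^ (2 * j) ≠ 1)
    (hj2 : ζ ^ (3 * j) ≠ 1) : fixPt ζ j ∈ Vset := by
  rw [fixPt_def, mem_Vset_mk]
  have key : ∀ k : ℕ, ∀ i : Fin 5, (ζ ^ (j * (i : ℕ))) ^ k = (ζ ^ (k * j)) ^ (i : ℕ) := by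
    intro k i
    rw [← pow_mul, ← pow_mul]
    congr 1
    ring
  have h52 : (ζ ^ (2 * j)) ^ 5 = 1 := by
    rw [← pow_mul, mul_comm, pow_mul, h5, one_pow]
  have h53 : (ζ ^ (3 * j)) ^ 5 = 1 := by
    rw [← pow_mul, mul_comm, pow_mul, h5, one_pow]
  constructor
  · rw [Finset.sum_congr rfl fun i _ => key 2 i]
    exact geom_zero hj1 h52
  · rw [Finset.sum_congr rfl fun i _ => key 3 i]
    exact geom_zero hj2 h53

lemma sigmaMap_fixPt {ζ : ℂ} (hz : ζ ≠ 0) (h5 : ζ ^ 5 = 1) (j : ℕ) :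
    sigmaMap (fixPt ζ j) = fixPt ζ j := by
  rw [fixPt_def, sigmaMap_mk, Projectivization.mk_eq_mk_iff]
  refine ⟨Units.mk0 (ζ ^ j) (pow_ne_zero _ hz), funext fun i => ?_⟩
  simp only [Units.smul_def, Pi.smul_apply, smul_eq_mul, Units.val_mk0, cycShift_apply]
  rw [← pow_add]
  have hm : ((i + 1 : Fin 5) : ℕ) = (((i : ℕ) + 1) % 5) := by
    simp [Fin.val_add]
  rw [hm]
  have h4 : (i : ℕ) < 5 := i.isLt
  set m := (i : ℕ) with hmm
  clear_value m
  interval_cases m <;>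
    (rw [pow_mod5 h5, pow_mod5 h5 (j * _)]; congr 1; omega)

lemma fixPt_ne {ζ : ℂ} (hprim : IsPrimitiveRoot ζ 5) {j k : ℕ} (hj : j < 5) (hk : k < 5)
    (hjk : j ≠ k) : fixPt ζ j ≠ fixPt ζ k := by
  intro h
  rw [fixPt_def, fixPt_def, Projectivization.mk_eq_mk_iff] at h
  obtain ⟨a, ha⟩ := h
  have h0 := congrFun ha 0
  have h1 := congrFun ha 1
  simp only [Units.smul_def, Pi.smul_apply, smul_eq_mul, Fin.val_zero, Fin.val_one,
    mul_zero, mul_one, pow_zero] at h0 h1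
  rw [h0, one_mul] at h1
  exact hjk (hprim.pow_inj hj hk h1.symm)

lemma fixed_in_V {v : Fin 5 → ℂ} (hv : v ≠ 0) {ζ : ℂ} (hprim : IsPrimitiveRoot ζ 5)
    (hV : Projectivization.mk ℂ v hv ∈ Vset)
    (hfix : sigmaMap (Projectivization.mk ℂ v hv) = Projectivization.mk ℂ v hv) :
    ∃ j, 1 ≤ j ∧ j < 5 ∧ Projectivization.mk ℂ v hv = fixPt ζ j := by
  rw [sigmaMap_mk, Projectivization.mk_eq_mk_iff] at hfix
  obtain ⟨a, ha⟩ := hfix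
  have hstep : ∀ i : Fin 5, v (i + 1) = (a : ℂ) * v i := by
    intro i
    have := congrFun ha i
    simp only [Units.smul_def, Pi.smul_apply, smul_eq_mul, cycShift_apply] at this
    exact this.symm
  have key' : ∀ m, ∀ h : m < 5, v ⟨m, h⟩ = (a : ℂ) ^ m * v 0 := by
    intro m
    induction m with
    | zero => intro h; simp
    | succ n ih =>
      intro h
      have hn : n < 5 := by omega
      have he : (⟨n, hn⟩ + 1 : Fin 5) = ⟨n + 1, h⟩ := by
        apply Fin.ext
        simp [Fin.val_add]
        omega
      rw [← he, hstep, ih hn, pow_succ]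
      ring
  have key : ∀ i : Fin 5, v i = (a : ℂ) ^ (i : ℕ) * v 0 := fun i => key' i.val i.isLt
  have K1 : v 1 = (a : ℂ) ^ 1 * v 0 := key' 1 (by norm_num)
  have K2 : v 2 = (a : ℂ) ^ 2 * v 0 := key' 2 (by norm_num)
  have K3 : v 3 = (a : ℂ) ^ 3 * v 0 := key' 3 (by norm_num)
  have K4 : v 4 = (a : ℂ) ^ 4 * v 0 := key' 4 (by norm_num)
  have hv0 : v 0 ≠ 0 := by
    intro h0
    apply hv
    funext i
    show v i = 0
    rw [key i, h0, mul_zero]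
  have hrec : v 0 = (a : ℂ) * ((a : ℂ) ^ 4 * v 0) := by
    have h40 : v ((4 : Fin 5) + 1) = (a : ℂ) * v 4 := hstep 4
    rw [show ((4 : Fin 5) + 1) = 0 from rfl] at h40
    calc v 0 = (a : ℂ) * v 4 := h40
    _ = (a : ℂ) * ((a : ℂ) ^ 4 * v 0) := by rw [K4]
  have ha5 : (a : ℂ) ^ 5 = 1 := by
    refine mul_right_cancel₀ hv0 ?_
    rw [one_mul]
    calc (a : ℂ) ^ 5 * v 0 = (a : ℂ) * ((a : ℂ) ^ 4 * v 0) := by ring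
    _ = v 0 := hrec.symm
  have ha1 : (a : ℂ) ≠ 1 := by
    intro h1
    have hs := (mem_Vset_mk hv).mp hV |>.1
    rw [Fin.sum_univ_five, K1, K2, K3, K4, h1] at hs
    have h5 : (5 : ℂ) * v 0 ^ 2 = 0 := by rw [← hs]; ring
    rcases mul_eq_zero.mp h5 with h | h
    · norm_num at h
    · exact hv0 (pow_eq_zero_iff (by norm_num) |>.mp h)
  obtain ⟨j, hj5, hja⟩ := hprim.eq_pow_of_pow_eq_one ha5
  have hj0 : j ≠ 0 := by
    intro h0
    rw [h0, pow_zero] at hja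
    exact ha1 hja.symm
  refine ⟨j, Nat.one_le_iff_ne_zero.mpr hj0, hj5, ?_⟩
  rw [fixPt_def, Projectivization.mk_eq_mk_iff]
  refine ⟨Units.mk0 (v 0) hv0, funext fun i => ?_⟩
  simp only [Units.smul_def, Pi.smul_apply, smul_eq_mul, Units.val_mk0]
  rw [key i, ← hja, ← pow_mul]
  ring


/-- The fixed-point computation underlying Proposition 4.5: the cyclic shift `σ` preserves
the K3 surface `V = {Σ zᵢ² = 0, Σ zᵢ³ = 0} ⊆ ℂP⁴`, and its fixed points in `V` are exactly
the four points `[1 : ζʲ : ζ²ʲ : ζ³ʲ : ζ⁴ʲ]`, `j = 1, 2, 3, 4`, where `ζ = exp(2πi/5)`. -/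
theorem stmt15 (ζ : ℂ) (hζ : ζ = Complex.exp (2 * Real.pi * Complex.I / 5)) :
    sigmaMap '' Vset = Vset ∧
    {p | p ∈ Vset ∧ sigmaMap p = p} =
      {fixPt ζ 1, fixPt ζ 2, fixPt ζ 3, fixPt ζ 4} ∧
    ({fixPt ζ 1, fixPt ζ 2, fixPt ζ 3, fixPt ζ 4} :
      Set (ℙ ℂ (Fin 5 → ℂ))).ncard = 4 := by
  have hprim : IsPrimitiveRoot ζ 5 := hζ ▸ Complex.isPrimitiveRoot_exp 5 (by norm_num)
  have h5 : ζ ^ 5 = 1 := hprim.pow_eq_one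
  have hz0 : ζ ≠ 0 := hprim.ne_zero (by norm_num)
  have hmem : ∀ j, 1 ≤ j → j < 5 → fixPt ζ j ∈ Vset := by
    intro j h1 h2
    refine fixPt_mem h5 ?_ ?_ <;>
      · intro h
        rw [hprim.pow_eq_one_iff_dvd] at h
        omega
  have hcyc : ∀ (v : Fin 5 → ℂ) (k : ℕ), (∑ i, (cycShift v) i ^ k) = ∑ i, v i ^ k :=
    fun v k => Fintype.sum_equiv (Equiv.addRight 1) _ _ fun i => rfl
  refine ⟨?_, ?_, ?_⟩
  · apply Set.eq_of_subset_of_subset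
    · rintro p ⟨q, hq, rfl⟩
      induction q using Projectivization.ind with
      | h v hv =>
        rw [sigmaMap_mk, mem_Vset_mk]
        rw [mem_Vset_mk] at hq
        exact ⟨by rw [hcyc]; exact hq.1, by rw [hcyc]; exact hq.2⟩
    · intro p hp
      induction p using Projectivization.ind with
      | h v hv =>
        have hwne : (fun i : Fin 5 => v (i - 1)) ≠ 0 := by
          intro h
          apply hv
          funext i
          have := congrFun h (i + 1)
          simpa using this
        refine ⟨Projectivization.mk ℂ _ hwne, ?_, ?_⟩
        · rw [mem_Vset_mk]
          have hsw : ∀ k : ℕ, (∑ i, (v (i - 1)) ^ k) = ∑ i, v i ^ k := fun k =>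
            Fintype.sum_equiv (Equiv.subRight 1) _ _ fun i => rfl
          rw [mem_Vset_mk] at hp
          exact ⟨by rw [hsw]; exact hp.1, by rw [hsw]; exact hp.2⟩
        · rw [sigmaMap_mk, Projectivization.mk_eq_mk_iff]
          refine ⟨1, funext fun i => ?_⟩
          simp [cycShift_apply]
  · ext p
    constructor
    · rintro ⟨hV, hfix⟩
      induction p using Projectivization.ind with
      | h v hv =>
        obtain ⟨j, hj1, hj5, hj⟩ := fixed_in_V hv hprim hV hfix
        interval_cases j <;> simp [hj]
    · intro hp
      have hall : ∀ j, 1 ≤ j → j < 5 → fixPt ζ j ∈ {p | p ∈ Vset ∧ sigmaMap p = p} :=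
        fun j h1 h2 => ⟨hmem j h1 h2, sigmaMap_fixPt hz0 h5 j⟩
      simp only [Set.mem_insert_iff, Set.mem_singleton_iff] at hp
      rcases hp with rfl | rfl | rfl | rfl <;> (apply hall <;> norm_num)
  · have d12 := fixPt_ne hprim (show (1:ℕ) < 5 by norm_num) (show (2:ℕ) < 5 by norm_num) (by norm_num)
    have d13 := fixPt_ne hprim (show (1:ℕ) < 5 by norm_num) (show (3:ℕ) < 5 by norm_num) (by norm_num)
    have d14 := fixPt_ne hprim (show (1:ℕ) < 5 by norm_num) (show (4:ℕ) < 5 by norm_num) (by norm_num)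
    have d23 := fixPt_ne hprim (show (2:ℕ) < 5 by norm_num) (show (3:ℕ) < 5 by norm_num) (by norm_num)
    have d24 := fixPt_ne hprim (show (2:ℕ) < 5 by norm_num) (show (4:ℕ) < 5 by norm_num) (by norm_num)
    have d34 := fixPt_ne hprim (show (3:ℕ) < 5 by norm_num) (show (4:ℕ) < 5 by norm_num) (by norm_num)
    rw [Set.ncard_insert_of_notMem (by simp [d12, d13, d14])
        (((Set.finite_singleton _).insert _).insert _),
      Set.ncard_insert_of_notMem (by simp [d23, d24]) ((Set.finite_singleton _).insert _),
      Set.ncard_insert_of_notMem (by simp [d34]) (Set.finite_singleton _),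
      Set.ncard_singleton]
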